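/- Any Bruhat (Gale) interval $[x, y] \subseteq \binom{[n]}{k}$ is a matroid, i.e., satisfies the basis exchange property. -/

import Mathlib

/-- Increasing enumeration of a finite set of naturals. -/
def sortedL (x : Finset ℕ) : List ℕ := x.sort (· ≤ ·)

/-- The Gale (Bruhat) order on finite subsets of ℕ: componentwise comparison of
the increasing enumerations. -/
def GaleLE (x y : Finset ℕ) : Prop :=
  ∀ i (hx : i < (sortedL x).length) (hy : i < (sortedL y).length),
    (sortedL x).get ⟨i, hx⟩ ≤ (sortedL y).get ⟨i, hy⟩

def GaleLT (x y : Finset ℕ) : Prop := GaleLE x y ∧ x ≠ y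

/-- Number of elements of `s` that are `≤ t`. -/
def cnt (s : Finset ℕ) (t : ℕ) : ℕ := (s.filter (· ≤ t)).card

lemma cnt_eq (s : Finset ℕ) (t : ℕ) :
    cnt s t = ((sortedL s).filter (fun e => e ≤ t)).length := by
  have h1 : ((sortedL s).filter (fun e => e ≤ t)).toFinset
      = (sortedL s).toFinset.filter (fun e => e ≤ t) := by
    simp [List.toFinset_filter (sortedL s) (fun e => decide (e ≤ t))]
  have h2 : ((sortedL s).filter (fun e => e ≤ t)).toFinset.card
      = ((sortedL s).filter (fun e => e ≤ t)).length :=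
    List.toFinset_card_of_nodup ((Finset.sort_nodup s _).filter _)
  rw [cnt, ← h2, h1, sortedL, Finset.sort_toFinset]

lemma helperA (s : Finset ℕ) (t i : ℕ) (h : i < (sortedL s).length)
    (hle : (sortedL s).get ⟨i, h⟩ ≤ t) : i + 1 ≤ cnt s t := by
  have hsort : (sortedL s).Pairwise (· < ·) := (Finset.sortedLT_sort s).pairwise
  have hpw := (List.pairwise_iff_get.mp hsort)
  rw [cnt_eq]
  have htake : ((sortedL s).take (i+1)).filter (fun e => e ≤ t) = (sortedL s).take (i+1) := by
    rw [List.filter_eq_self]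
    intro e he
    obtain ⟨j, hj, rfl⟩ := List.get_of_mem he
    have hjl : (j : ℕ) < i + 1 := by
      have h2 : (j:ℕ) < (List.take (i+1) (sortedL s)).length := j.isLt
      have h3 := List.length_take (i := i+1) (l := sortedL s)
      omega
    have hji : (j : ℕ) ≤ i := Nat.lt_succ_iff.mp hjl
    have hjL : (j : ℕ) < (sortedL s).length := lt_of_le_of_lt hji h
    have hgt : ((sortedL s).take (i+1)).get j = (sortedL s).get ⟨j, hjL⟩ := by
      simp [List.getElem_take]
    rw [hgt]
    simp only [decide_eq_true_eq]
    rcases eq_or_lt_of_le hji with heq | hlt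
    · have : (sortedL s).get ⟨j, hjL⟩ = (sortedL s).get ⟨i, h⟩ := by
        congr 1
        exact Fin.ext (by simp only [Fin.val_mk]; omega)
      omega
    · exact le_of_lt (lt_of_lt_of_le (hpw ⟨j, hjL⟩ ⟨i, h⟩ hlt) hle)
  have hsub : List.Sublist (((sortedL s).take (i+1)).filter (fun e => e ≤ t))
      ((sortedL s).filter (fun e => e ≤ t)) :=
    (List.take_sublist _ _).filter _
  have h3 := hsub.length_le
  rw [htake] at h3
  rw [List.length_take] at h3
  omega

lemma helperB (s : Finset ℕ) (t i : ℕ) (h : i < (sortedL s).length)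
    (hc : i + 1 ≤ cnt s t) : (sortedL s).get ⟨i, h⟩ ≤ t := by
  by_contra hgt
  push_neg at hgt
  have hsort : (sortedL s).Pairwise (· < ·) := (Finset.sortedLT_sort s).pairwise
  have hpw := (List.pairwise_iff_get.mp hsort)
  rw [cnt_eq] at hc
  have hdrop : ((sortedL s).drop i).filter (fun e => e ≤ t) = [] := by
    rw [List.filter_eq_nil_iff]
    intro e he
    obtain ⟨j, hj, rfl⟩ := List.get_of_mem he
    have hjL : i + (j:ℕ) < (sortedL s).length := by
      have h2 : (j:ℕ) < (List.drop i (sortedL s)).length := j.isLt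
      have h3 := List.length_drop (i := i) (l := sortedL s)
      omega
    have hge : (sortedL s).get ⟨i, h⟩ ≤ ((sortedL s).drop i).get j := by
      have hgd : ((sortedL s).drop i).get j = (sortedL s).get ⟨i + j, hjL⟩ := by
        simp [List.getElem_drop]
      rw [hgd]
      rcases Nat.eq_zero_or_pos j with hj0 | hj0
      · have : (sortedL s).get ⟨i + j, hjL⟩ = (sortedL s).get ⟨i, h⟩ := by
          congr 1
          exact Fin.ext (by simp only [Fin.val_mk]; omega)
        omega
      · exact le_of_lt (hpw ⟨i, h⟩ ⟨i + j, hjL⟩ (Fin.mk_lt_mk.mpr (by omega)))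
    simp only [decide_eq_true_eq, not_le]
    omega
  have hsplit : (sortedL s).filter (fun e => e ≤ t)
      = ((sortedL s).take i).filter (fun e => e ≤ t)
        ++ ((sortedL s).drop i).filter (fun e => e ≤ t) := by
    rw [← List.filter_append, List.take_append_drop]
  rw [hsplit, hdrop, List.append_nil] at hc
  have h4 : (((sortedL s).take i).filter (fun e => e ≤ t)).length ≤ ((sortedL s).take i).length :=
    List.length_filter_le _ _
  rw [List.length_take] at h4
  omega

lemma gale_iff (x y : Finset ℕ) (h : x.card = y.card) :
    GaleLE x y ↔ ∀ t, cnt y t ≤ cnt x t := by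
  have hlx : (sortedL x).length = x.card := Finset.length_sort _
  have hly : (sortedL y).length = y.card := Finset.length_sort _
  constructor
  · intro hg t
    by_cases h0 : cnt y t = 0
    · omega
    have hyt : cnt y t ≤ y.card := by
      rw [cnt]; exact Finset.card_filter_le _ _
    set m := cnt y t with hm
    have hi : m - 1 < (sortedL y).length := by omega
    have hix : m - 1 < (sortedL x).length := by omega
    have h1 : (sortedL y).get ⟨m - 1, hi⟩ ≤ t := helperB y t (m-1) hi (by omega)
    have h2 : (sortedL x).get ⟨m - 1, hix⟩ ≤ t := le_trans (hg (m-1) hix hi) h1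
    have := helperA x t (m-1) hix h2
    omega
  · intro hc i hx hy
    have h1 : i + 1 ≤ cnt y ((sortedL y).get ⟨i, hy⟩) :=
      helperA y _ i hy le_rfl
    exact helperB x _ i hx (le_trans h1 (hc _))

lemma cnt_insert (s : Finset ℕ) (x t : ℕ) (h : x ∉ s) :
    cnt (insert x s) t = cnt s t + if x ≤ t then 1 else 0 := by
  rw [cnt, cnt, Finset.filter_insert]
  split_ifs with hx
  · rw [Finset.card_insert_of_notMem (by simp [h])]
  · simp

lemma cnt_split (s : Finset ℕ) (u v : ℕ) (h : u ≤ v) :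
    cnt s v = cnt s u + (s.filter (fun e => u < e ∧ e ≤ v)).card := by
  rw [cnt, cnt, ← Finset.card_union_of_disjoint, ← Finset.filter_or]
  · apply congrArg
    apply Finset.filter_congr
    intro e _
    constructor
    · intro h1; omega
    · intro h1; omega
  · rw [Finset.disjoint_left]
    intro e h1 h2
    rw [Finset.mem_filter] at h1 h2
    omega

lemma cnt_all (s : Finset ℕ) (t : ℕ) (h : ∀ e ∈ s, e ≤ t) : cnt s t = s.card := by
  rw [cnt, Finset.filter_true_of_mem h]

lemma pigeon (A B : Finset ℕ) (P : ℕ → Prop) [DecidablePred P]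
    (h : ((A ∩ B).filter P).card < (B.filter P).card) : ∃ e, e ∈ B ∧ P e ∧ e ∉ A := by
  by_contra hc
  push_neg at hc
  have hsub : B.filter P ⊆ (A ∩ B).filter P := by
    intro e he
    rw [Finset.mem_filter] at *
    exact ⟨Finset.mem_inter.mpr ⟨hc e he.1 he.2, he.1⟩, he.2⟩
  exact absurd (Finset.card_le_card hsub) (by omega)

/-- Any Gale (Bruhat) interval of `k`-subsets of `[n]` is a matroid: it
satisfies the basis exchange property. -/
theorem interval_is_matroid
    (n k : ℕ) (a b : Finset ℕ)
    (ha : a ⊆ Finset.Icc 1 n) (hb : b ⊆ Finset.Icc 1 n)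
    (hac : a.card = k) (hbc : b.card = k)
    (hab : GaleLE a b)
    (X : Set (Finset ℕ))
    (hX : ∀ z, z ∈ X ↔ (z ⊆ Finset.Icc 1 n ∧ z.card = k ∧ GaleLE a z ∧ GaleLE z b)) :
    ∀ A ∈ X, ∀ B ∈ X, ∀ a' ∈ A \ B, ∃ b' ∈ B \ A, (A \ {a'}) ∪ {b'} ∈ X := by
  classical
  intro A hA B hB a' ha'
  rw [hX] at hA hB
  obtain ⟨hAI, hAc, haA, hAb⟩ := hA
  obtain ⟨hBI, hBc, haB, hBb⟩ := hB
  rw [Finset.mem_sdiff] at ha'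
  obtain ⟨ha'A, ha'B⟩ := ha'
  have cAa : ∀ t, cnt A t ≤ cnt a t := (gale_iff a A (by rw [hac, hAc])).mp haA
  have cbA : ∀ t, cnt b t ≤ cnt A t := (gale_iff A b (by rw [hAc, hbc])).mp hAb
  have cBa : ∀ t, cnt B t ≤ cnt a t := (gale_iff a B (by rw [hac, hBc])).mp haB
  have cbB : ∀ t, cnt b t ≤ cnt B t := (gale_iff B b (by rw [hBc, hbc])).mp hBb
  have ha'n : 1 ≤ a' ∧ a' ≤ n := Finset.mem_Icc.mp (hAI ha'A)
  have hAstep : cnt A a' = cnt A (a' - 1) + 1 := by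
    rw [cnt_split A (a'-1) a' (by omega)]
    have heq : A.filter (fun e => a' - 1 < e ∧ e ≤ a') = {a'} := by
      ext e
      simp only [Finset.mem_filter, Finset.mem_singleton]
      constructor
      · rintro ⟨heA, h1, h2⟩; omega
      · rintro rfl; exact ⟨ha'A, by omega, le_rfl⟩
    rw [heq, Finset.card_singleton]
  have hBstep : cnt B a' = cnt B (a' - 1) := by
    rw [cnt_split B (a'-1) a' (by omega)]
    have heq : B.filter (fun e => a' - 1 < e ∧ e ≤ a') = ∅ := by
      rw [Finset.filter_eq_empty_iff]
      intro e heB hcon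
      have he : e = a' := by omega
      exact ha'B (he ▸ heB)
    rw [heq]
    simp
  -- shared finale
  have finale : ∀ b', b' ∈ B → b' ∉ A →
      (∀ t, cnt b t + (if a' ≤ t then 1 else 0) ≤ cnt A t + (if b' ≤ t then 1 else 0) ∧
            cnt A t + (if b' ≤ t then 1 else 0) ≤ cnt a t + (if a' ≤ t then 1 else 0)) →
      ∃ b' ∈ B \ A, (A \ {a'}) ∪ {b'} ∈ X := by
    intro b' hb'B hb'A hbound
    have hA'eq : (A \ {a'}) ∪ {b'} = insert b' (A.erase a') := by
      rw [Finset.sdiff_singleton_eq_erase, Finset.union_comm]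
      exact (Finset.insert_eq _ _).symm
    have hb'ne : b' ∉ A.erase a' := fun h => hb'A (Finset.mem_of_mem_erase h)
    have hk1 : 1 ≤ k := by
      rw [← hAc]
      exact Finset.card_pos.mpr ⟨a', ha'A⟩
    have hcard : ((A \ {a'}) ∪ {b'}).card = k := by
      rw [hA'eq, Finset.card_insert_of_notMem hb'ne, Finset.card_erase_of_mem ha'A, hAc]
      omega
    have hsub : (A \ {a'}) ∪ {b'} ⊆ Finset.Icc 1 n := by
      intro e he
      rcases Finset.mem_union.mp he with h | h
      · exact hAI (Finset.mem_sdiff.mp h).1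
      · rw [Finset.mem_singleton] at h
        exact hBI (h ▸ hb'B)
    have hcntEq : ∀ t, cnt ((A \ {a'}) ∪ {b'}) t + (if a' ≤ t then 1 else 0)
        = cnt A t + (if b' ≤ t then 1 else 0) := by
      intro t
      rw [hA'eq, cnt_insert _ _ _ hb'ne]
      have hAe : cnt A t = cnt (A.erase a') t + (if a' ≤ t then 1 else 0) := by
        conv_lhs => rw [← Finset.insert_erase ha'A]
        exact cnt_insert _ _ _ (Finset.notMem_erase _ _)
      omega
    refine ⟨b', Finset.mem_sdiff.mpr ⟨hb'B, hb'A⟩, ?_⟩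
    rw [hX]
    refine ⟨hsub, hcard, ?_, ?_⟩
    · rw [gale_iff a _ (by rw [hac, hcard])]
      intro t
      have h1 := hcntEq t
      have h2 := (hbound t).2
      have h3 := cAa t
      omega
    · rw [gale_iff _ b (by rw [hcard, hbc])]
      intro t
      have h1 := hcntEq t
      have h2 := (hbound t).1
      have h3 := cbA t
      omega
  by_cases hcase : cnt A (a' - 1) < cnt B (a' - 1)
  · -- Case 1: replace a' by a smaller element
    have hT : ∃ t₀, t₀ < a' ∧ (∀ s, t₀ ≤ s → s < a' → cnt A s < cnt B s) ∧
        cnt B (t₀ - 1) ≤ cnt A (t₀ - 1) := by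
      have hQ : ∃ m, m < a' ∧ ∀ s, m ≤ s → s < a' → cnt A s < cnt B s := by
        refine ⟨a' - 1, by omega, fun s hs1 hs2 => ?_⟩
        have hs : s = a' - 1 := by omega
        rwa [hs]
      obtain ⟨ht₀a, ht₀C⟩ := Nat.find_spec hQ
      refine ⟨Nat.find hQ, ht₀a, ht₀C, ?_⟩
      rcases Nat.eq_zero_or_pos (Nat.find hQ) with h0 | h0
      · rw [h0]
        simp only [Nat.zero_sub]
        have hA0 : cnt A 0 = 0 := by
          rw [cnt, Finset.card_eq_zero, Finset.filter_eq_empty_iff]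
          intro e he hcon
          have := (Finset.mem_Icc.mp (hAI he)).1
          omega
        have hB0 : cnt B 0 = 0 := by
          rw [cnt, Finset.card_eq_zero, Finset.filter_eq_empty_iff]
          intro e he hcon
          have := (Finset.mem_Icc.mp (hBI he)).1
          omega
        omega
      · have hmin := Nat.find_min hQ (m := Nat.find hQ - 1) (by omega)
        push_neg at hmin
        obtain ⟨s, hs1, hs2, hs3⟩ := hmin (by omega)
        have hs : s = Nat.find hQ - 1 := by
          by_contra hne
          have : Nat.find hQ ≤ s := by omega
          exact absurd hs3 (not_le.mpr (ht₀C s this hs2))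
        rwa [hs] at hs3
    obtain ⟨t₀, ht₀a, ht₀C, hbad⟩ := hT
    have hsA := cnt_split A (t₀ - 1) (a' - 1) (by omega)
    have hsB := cnt_split B (t₀ - 1) (a' - 1) (by omega)
    have hcard2 : ((A ∩ B).filter (fun e => t₀ - 1 < e ∧ e ≤ a' - 1)).card
        < (B.filter (fun e => t₀ - 1 < e ∧ e ≤ a' - 1)).card := by
      have hle : ((A ∩ B).filter (fun e => t₀ - 1 < e ∧ e ≤ a' - 1)).card
          ≤ (A.filter (fun e => t₀ - 1 < e ∧ e ≤ a' - 1)).card :=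
        Finset.card_le_card (Finset.filter_subset_filter _ Finset.inter_subset_left)
      omega
    obtain ⟨b', hb'B, hb'P, hb'A⟩ := pigeon A B _ hcard2
    have key : ∀ t, b' ≤ t → t < a' → cnt A t < cnt B t := by
      intro t h1t h2t
      exact ht₀C t (by omega) h2t
    refine finale b' hb'B hb'A (fun t => ?_)
    have h1 := cAa t
    have h2 := cbA t
    have h3 := cBa t
    have h4 := cbB t
    by_cases hbt : b' ≤ t
    · by_cases hat : a' ≤ t
      · simp only [if_pos hbt, if_pos hat]
        omega
      · have hk := key t hbt (by omega)
        simp only [if_pos hbt, if_neg hat]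
        omega
    · have hat : ¬ a' ≤ t := by omega
      simp only [if_neg hbt, if_neg hat]
      omega
  · -- Case 2: replace a' by a larger element
    push_neg at hcase
    have hstep : cnt B a' < cnt A a' := by omega
    have hT : ∃ t₁, a' < t₁ ∧ cnt A t₁ ≤ cnt B t₁ ∧
        (∀ s, a' ≤ s → s < t₁ → cnt B s < cnt A s) := by
      have hR : ∃ m, a' ≤ m ∧ cnt A m ≤ cnt B m := by
        refine ⟨a' + n, by omega, ?_⟩
        have h1 : cnt A (a' + n) = k := by
          rw [cnt_all A _ (fun e he => by
            have := (Finset.mem_Icc.mp (hAI he)).2; omega), hAc]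
        have h2 : cnt B (a' + n) = k := by
          rw [cnt_all B _ (fun e he => by
            have := (Finset.mem_Icc.mp (hBI he)).2; omega), hBc]
        omega
      obtain ⟨ht₁a, ht₁C⟩ := Nat.find_spec hR
      have hmin : ∀ s, a' ≤ s → s < Nat.find hR → cnt B s < cnt A s := by
        intro s hs1 hs2
        have := Nat.find_min hR hs2
        push_neg at this
        exact this hs1
      have hgt : a' < Nat.find hR := by
        rcases eq_or_lt_of_le ht₁a with h | h
        · rw [← h] at ht₁C
          omega
        · exact h
      exact ⟨Nat.find hR, hgt, ht₁C, hmin⟩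
    obtain ⟨t₁, ht₁a, ht₁C, hmin⟩ := hT
    have hsA := cnt_split A (a' - 1) t₁ (by omega)
    have hsB := cnt_split B (a' - 1) t₁ (by omega)
    have ha'in : a' ∈ A.filter (fun e => a' - 1 < e ∧ e ≤ t₁) :=
      Finset.mem_filter.mpr ⟨ha'A, by omega, by omega⟩
    have hAB : ((A ∩ B).filter (fun e => a' - 1 < e ∧ e ≤ t₁)).card
        < (A.filter (fun e => a' - 1 < e ∧ e ≤ t₁)).card := by
      apply Finset.card_lt_card
      rw [Finset.ssubset_iff_of_subset
        (Finset.filter_subset_filter _ Finset.inter_subset_left)]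
      refine ⟨a', ha'in, fun hmem => ?_⟩
      rw [Finset.mem_filter, Finset.mem_inter] at hmem
      exact ha'B hmem.1.2
    have hcard2 : ((A ∩ B).filter (fun e => a' - 1 < e ∧ e ≤ t₁)).card
        < (B.filter (fun e => a' - 1 < e ∧ e ≤ t₁)).card := by omega
    obtain ⟨b', hb'B, hb'P, hb'A⟩ := pigeon A B _ hcard2
    have hb'ne : b' ≠ a' := fun h => hb'A (h ▸ ha'A)
    have key : ∀ t, a' ≤ t → t < b' → cnt B t < cnt A t := by
      intro t h1t h2t
      exact hmin t h1t (by omega)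
    refine finale b' hb'B hb'A (fun t => ?_)
    have h1 := cAa t
    have h2 := cbA t
    have h3 := cBa t
    have h4 := cbB t
    by_cases hat : a' ≤ t
    · by_cases hbt : b' ≤ t
      · simp only [if_pos hbt, if_pos hat]
        omega
      · have hk := key t hat (by omega)
        simp only [if_neg hbt, if_pos hat]
        omega
    · have hbt : ¬ b' ≤ t := by omega
      simp only [if_neg hbt, if_neg hat]
      omega
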